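/- Let A be a real m×n matrix satisfying the restricted isometry property of order 2s with constant δ_{2s} < √2 − 1, and let x̄ ∈ ℝ^n satisfy A x̄ = b and ‖x̄‖₀ ≤ s. Then x̄ is the unique minimizer of ‖x‖₁ over the set {x ∈ ℝ^n : Ax = b}; in particular the solution of the minimum-ℓ1 problem also solves the minimum-ℓ0 problem. -/

import Mathlib

open scoped Matrix

/-- The ℓ0 "norm": number of nonzero entries. -/
noncomputable def l0norm {n : ℕ} (x : Fin n → ℝ) : ℕ :=
  {i : Fin n | x i ≠ 0}.ncard

/-- The ℓ1 norm of a vector. -/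
def l1norm {n : ℕ} (x : Fin n → ℝ) : ℝ := ∑ i, |x i|

open Finset

lemma l0_eq {n : ℕ} (y : Fin n → ℝ) :
    l0norm y = (univ.filter (fun i => y i ≠ 0)).card := by
  rw [l0norm, ← Set.ncard_coe_finset]
  congr 1
  ext i
  simp

lemma l0_le_of_subset {n : ℕ} (y : Fin n → ℝ) (T : Finset (Fin n))
    (h : ∀ i, y i ≠ 0 → i ∈ T) : l0norm y ≤ T.card := by
  rw [l0_eq]
  exact Finset.card_le_card (fun i hi => h i (by simpa using hi))

lemma sum_sq_eq_zero_iff {n : ℕ} (y : Fin n → ℝ) :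
    (∑ i, (y i)^2) = 0 ↔ ∀ i, y i = 0 := by
  rw [Finset.sum_eq_zero_iff_of_nonneg (fun i _ => sq_nonneg _)]
  simp [pow_eq_zero_iff]

lemma unique_block {s : ℕ} (hs : 0 < s) (i j : ℕ) :
    (j*s ≤ i ∧ i < j*s+s) ↔ j = i/s := by
  constructor
  · rintro ⟨h1, h2⟩
    have := Nat.div_add_mod i s
    have hm := Nat.mod_lt i hs
    rcases lt_trichotomy j (i/s) with h | h | h
    · exfalso
      have : j + 1 ≤ i / s := h
      have h3 : (j+1)*s ≤ (i/s)*s := Nat.mul_le_mul_right s this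
      have h4 : (i/s)*s ≤ i := Nat.div_mul_le_self i s
      nlinarith
    · exact h
    · exfalso
      have : i/s + 1 ≤ j := h
      have h3 : (i/s + 1)*s ≤ j*s := Nat.mul_le_mul_right s this
      nlinarith
  · rintro rfl
    have h1 : (i/s)*s ≤ i := Nat.div_mul_le_self i s
    have h2 := Nat.div_add_mod i s
    have hm := Nat.mod_lt i hs
    have h3 : s*(i/s) = (i/s)*s := Nat.mul_comm _ _
    omega

lemma sum_blocks {k s : ℕ} (hs : 0 < s) (F : Fin k → ℝ) :
    ∑ j ∈ Finset.range (k+1),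
      ∑ i ∈ univ.filter (fun i : Fin k => j*s ≤ (i:ℕ) ∧ (i:ℕ) < j*s+s), F i
      = ∑ i, F i := by
  classical
  have : ∀ j, ∑ i ∈ univ.filter (fun i : Fin k => j*s ≤ (i:ℕ) ∧ (i:ℕ) < j*s+s), F i
      = ∑ i : Fin k, if j*s ≤ (i:ℕ) ∧ (i:ℕ) < j*s+s then F i else 0 := by
    intro j; rw [Finset.sum_filter]
  rw [Finset.sum_congr rfl (fun j _ => this j), Finset.sum_comm]
  apply Finset.sum_congr rfl
  intro i _
  rw [Finset.sum_eq_single_of_mem ((i:ℕ)/s)]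
  · rw [if_pos]
    rw [unique_block hs]
  · rw [Finset.mem_range]
    have h1 : (i:ℕ)/s ≤ (i:ℕ) := Nat.div_le_self _ _
    have h2 : (i:ℕ) < k := i.2
    omega
  · intro j _ hj
    rw [if_neg]
    rw [unique_block hs]
    exact hj

lemma ro {m n : ℕ} (s : ℕ) (A : Matrix (Fin m) (Fin n) ℝ) (δ : ℝ)
    (hRIP : ∀ y : Fin n → ℝ, l0norm y ≤ 2 * s →
      (1 - δ) * (∑ i, (y i) ^ 2) ≤ (∑ j, ((A *ᵥ y) j) ^ 2) ∧
      (∑ j, ((A *ᵥ y) j) ^ 2) ≤ (1 + δ) * (∑ i, (y i) ^ 2))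
    (u v : Fin n → ℝ) (T U : Finset (Fin n)) (hdisj : Disjoint T U)
    (hcard : T.card + U.card ≤ 2 * s)
    (hu : ∀ i, u i ≠ 0 → i ∈ T) (hv : ∀ i, v i ≠ 0 → i ∈ U) :
    |∑ j, (A *ᵥ u) j * (A *ᵥ v) j| ≤
      δ * Real.sqrt (∑ i, (u i)^2) * Real.sqrt (∑ i, (v i)^2) := by
  classical
  set a := Real.sqrt (∑ i, (u i)^2) with ha_def
  set b := Real.sqrt (∑ i, (v i)^2) with hb_def
  have hA : 0 ≤ ∑ i, (u i)^2 := Finset.sum_nonneg (fun i _ => sq_nonneg _)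
  have hB : 0 ≤ ∑ i, (v i)^2 := Finset.sum_nonneg (fun i _ => sq_nonneg _)
  have ha2 : a^2 = ∑ i, (u i)^2 := Real.sq_sqrt hA
  have hb2 : b^2 = ∑ i, (v i)^2 := Real.sq_sqrt hB
  have huv : ∀ i, u i * v i = 0 := by
    intro i
    by_cases h1 : u i = 0
    · simp [h1]
    · have h2 : i ∈ T := hu i h1
      have h3 : i ∉ U := Finset.disjoint_left.mp hdisj h2
      have : v i = 0 := by by_contra h4; exact h3 (hv i h4)
      simp [this]
  by_cases hA0 : (∑ i, (u i)^2) = 0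
  · have hu0 : u = 0 := funext ((sum_sq_eq_zero_iff u).mp hA0)
    rw [hu0]
    simp [Matrix.mulVec_zero, ha_def, hA0]
  by_cases hB0 : (∑ i, (v i)^2) = 0
  · have hv0 : v = 0 := funext ((sum_sq_eq_zero_iff v).mp hB0)
    rw [hv0]
    simp [Matrix.mulVec_zero, hb_def, hB0]
  have ha : 0 < a := Real.sqrt_pos.mpr (lt_of_le_of_ne hA (Ne.symm hA0))
  have hb : 0 < b := Real.sqrt_pos.mpr (lt_of_le_of_ne hB (Ne.symm hB0))
  set p := b • u + a • v with hp_def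
  set q := b • u - a • v with hq_def
  have hps : ∀ i, p i ≠ 0 → i ∈ T ∪ U := by
    intro i hi
    simp only [hp_def, Pi.add_apply, Pi.smul_apply, smul_eq_mul] at hi
    by_cases h1 : u i = 0
    · simp only [h1, mul_zero, zero_add] at hi
      exact Finset.mem_union_right _ (hv i (fun h => hi (by simp [h])))
    · exact Finset.mem_union_left _ (hu i h1)
  have hqs : ∀ i, q i ≠ 0 → i ∈ T ∪ U := by
    intro i hi
    simp only [hq_def, Pi.sub_apply, Pi.smul_apply, smul_eq_mul] at hi
    by_cases h1 : u i = 0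
    · simp only [h1, mul_zero, zero_sub, neg_ne_zero] at hi
      exact Finset.mem_union_right _ (hv i (fun h => hi (by simp [h])))
    · exact Finset.mem_union_left _ (hu i h1)
  have hcardTU : (T ∪ U).card ≤ 2 * s := le_trans (Finset.card_union_le T U) hcard
  have hpl0 : l0norm p ≤ 2 * s := le_trans (l0_le_of_subset p _ hps) hcardTU
  have hql0 : l0norm q ≤ 2 * s := le_trans (l0_le_of_subset q _ hqs) hcardTU
  have hpsq : (∑ i, (p i)^2) = 2 * a^2 * b^2 := by
    have : ∀ i, (p i)^2 = b^2 * (u i)^2 + a^2 * (v i)^2 + 2*a*b*(u i * v i) := by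
      intro i
      simp only [hp_def, Pi.add_apply, Pi.smul_apply, smul_eq_mul]
      ring
    rw [Finset.sum_congr rfl (fun i _ => this i)]
    simp only [Finset.sum_add_distrib, ← Finset.mul_sum]
    simp only [huv]
    rw [← ha2, ← hb2]
    simp
    ring
  have hqsq : (∑ i, (q i)^2) = 2 * a^2 * b^2 := by
    have : ∀ i, (q i)^2 = b^2 * (u i)^2 + a^2 * (v i)^2 - 2*a*b*(u i * v i) := by
      intro i
      simp only [hq_def, Pi.sub_apply, Pi.smul_apply, smul_eq_mul]
      ring
    rw [Finset.sum_congr rfl (fun i _ => this i)]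
    simp only [Finset.sum_sub_distrib, Finset.sum_add_distrib, ← Finset.mul_sum]
    simp only [huv]
    rw [← ha2, ← hb2]
    simp
    ring
  have hAp : A *ᵥ p = b • (A *ᵥ u) + a • (A *ᵥ v) := by
    rw [hp_def, Matrix.mulVec_add, Matrix.mulVec_smul, Matrix.mulVec_smul]
  have hAq : A *ᵥ q = b • (A *ᵥ u) - a • (A *ᵥ v) := by
    rw [hq_def, Matrix.mulVec_sub, Matrix.mulVec_smul, Matrix.mulVec_smul]
  set D := ∑ j, (A *ᵥ u) j * (A *ᵥ v) j with hD_def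
  set SAu := ∑ j, ((A *ᵥ u) j)^2 with hSAu_def
  set SAv := ∑ j, ((A *ᵥ v) j)^2 with hSAv_def
  have hApsq : (∑ j, ((A *ᵥ p) j)^2) = b^2 * SAu + a^2 * SAv + 2*a*b*D := by
    rw [hAp]
    have : ∀ j, (b * (A *ᵥ u) j + a * (A *ᵥ v) j)^2
        = b^2 * ((A *ᵥ u) j)^2 + a^2 * ((A *ᵥ v) j)^2 + 2*a*b*((A *ᵥ u) j * (A *ᵥ v) j) := by
      intro j; ring
    simp only [Pi.add_apply, Pi.smul_apply, smul_eq_mul]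
    rw [Finset.sum_congr rfl (fun j _ => this j)]
    simp only [Finset.sum_add_distrib, ← Finset.mul_sum, hD_def, hSAu_def, hSAv_def]
  have hAqsq : (∑ j, ((A *ᵥ q) j)^2) = b^2 * SAu + a^2 * SAv - 2*a*b*D := by
    rw [hAq]
    have : ∀ j, (b * (A *ᵥ u) j - a * (A *ᵥ v) j)^2
        = b^2 * ((A *ᵥ u) j)^2 + a^2 * ((A *ᵥ v) j)^2 - 2*a*b*((A *ᵥ u) j * (A *ᵥ v) j) := by
      intro j; ring
    simp only [Pi.sub_apply, Pi.smul_apply, smul_eq_mul]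
    rw [Finset.sum_congr rfl (fun j _ => this j)]
    simp only [Finset.sum_sub_distrib, Finset.sum_add_distrib, ← Finset.mul_sum, hD_def, hSAu_def, hSAv_def]
  have h1 := (hRIP p hpl0).2
  have h2 := (hRIP q hql0).1
  have h3 := (hRIP q hql0).2
  have h4 := (hRIP p hpl0).1
  rw [hpsq, hApsq] at h1 h4
  rw [hqsq, hAqsq] at h2 h3
  rw [abs_le]
  constructor
  · nlinarith [mul_pos ha hb]
  · nlinarith [mul_pos ha hb]
set_option maxHeartbeats 2000000 in
lemma key_unique {m n : ℕ} (s : ℕ) (A : Matrix (Fin m) (Fin n) ℝ) (δ : ℝ)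
    (hδ0 : 0 < δ) (hδ : δ < Real.sqrt 2 - 1)
    (hRIP : ∀ y : Fin n → ℝ, l0norm y ≤ 2 * s →
      (1 - δ) * (∑ i, (y i) ^ 2) ≤ (∑ j, ((A *ᵥ y) j) ^ 2) ∧
      (∑ j, ((A *ᵥ y) j) ^ 2) ≤ (1 + δ) * (∑ i, (y i) ^ 2))
    (xbar : Fin n → ℝ) (hsparse : l0norm xbar ≤ s)
    (x : Fin n → ℝ) (hAx : A *ᵥ x = A *ᵥ xbar) (hle : l1norm x ≤ l1norm xbar) :
    x = xbar := by
  classical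
  -- trivial case s = 0
  rcases Nat.eq_zero_or_pos s with hs0 | hs
  · subst hs0
    rw [l0_eq] at hsparse
    have hxb0 : xbar = 0 := by
      funext i
      by_contra hi
      have h1 : 0 < (univ.filter (fun i => xbar i ≠ 0)).card :=
        Finset.card_pos.mpr ⟨i, Finset.mem_filter.mpr ⟨Finset.mem_univ i, hi⟩⟩
      omega
    rw [hxb0] at hle
    have hz : l1norm (0 : Fin n → ℝ) = 0 := by
      rw [l1norm]; simp
    rw [hz] at hle
    rw [hxb0]
    funext i
    have h2 : |x i| ≤ 0 := by
      have h3 := Finset.single_le_sum (f := fun i => |x i|)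
        (fun i _ => abs_nonneg _) (Finset.mem_univ i)
      rw [l1norm] at hle
      linarith
    simpa using le_antisymm h2 (abs_nonneg _)
  -- main case
  set h : Fin n → ℝ := x - xbar with hh_def
  have hAh : A *ᵥ h = 0 := by
    rw [hh_def, Matrix.mulVec_sub, hAx, sub_self]
  set T0 : Finset (Fin n) := univ.filter (fun i => xbar i ≠ 0) with hT0_def
  have hT0card : T0.card ≤ s := by rw [l0_eq] at hsparse; exact hsparse
  set k : ℕ := T0ᶜ.card with hk_def
  set c : Fin k ≃o {a // a ∈ T0ᶜ} := T0ᶜ.orderIsoOfFin rfl with hc_def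
  set g0 : Fin k → ℝ := fun i => -|h ((c i : Fin n))| with hg0_def
  set σp := Tuple.sort g0 with hσp_def
  set e : Fin k → Fin n := fun i => ((c (σp i) : Fin n)) with he_def
  have he_mem : ∀ i, e i ∈ T0ᶜ := fun i => (c (σp i)).2
  have he_inj : Function.Injective e := by
    intro i j hij
    exact σp.injective (c.injective (Subtype.coe_injective hij))
  have he_anti : ∀ i j : Fin k, i ≤ j → |h (e j)| ≤ |h (e i)| := by
    intro i j hij
    have := Tuple.monotone_sort g0 hij
    simp only [Function.comp_apply, hg0_def] at this
    rw [← hσp_def] at this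
    have := neg_le_neg_iff.mp this
    exact this
  have he_surj : ∀ a ∈ T0ᶜ, ∃ i, e i = a := by
    intro a ha
    refine ⟨σp.symm (c.symm ⟨a, ha⟩), ?_⟩
    simp [he_def]
  -- blocks
  set I : ℕ → Finset (Fin k) :=
    fun j => univ.filter (fun i : Fin k => j*s ≤ (i:ℕ) ∧ (i:ℕ) < j*s+s) with hI_def
  set B : ℕ → Finset (Fin n) := fun j => (I j).image e with hB_def
  set w : ℕ → Fin n → ℝ := fun j a => if a ∈ B j then h a else 0 with hw_def
  set f0 : Fin n → ℝ := fun a => if a ∈ T0 then h a else 0 with hf0_def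
  have cardI : ∀ j, (I j).card ≤ s := by
    intro j
    have : (I j).card ≤ (Finset.Ico (j*s) (j*s+s)).card := by
      refine Finset.card_le_card_of_injOn (fun i => (i:ℕ)) ?_ ?_
      · intro i hi
        rw [hI_def] at hi
        simp only [Finset.mem_coe, Finset.mem_filter] at hi
        rw [Finset.mem_coe, Finset.mem_Ico]
        exact hi.2
      · exact fun i _ j _ hij => Fin.val_injective hij
    rwa [Nat.card_Ico, Nat.add_sub_cancel_left] at this
  have cardB : ∀ j, (B j).card ≤ s := by
    intro j
    exact le_trans Finset.card_image_le (cardI j)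
  have hBsub : ∀ j, B j ⊆ T0ᶜ := by
    intro j a ha
    rw [hB_def] at ha
    obtain ⟨i, _, rfl⟩ := Finset.mem_image.mp ha
    exact he_mem i
  have hmemB : ∀ (j : ℕ) (i : Fin k), e i ∈ B j ↔ i ∈ I j := by
    intro j i
    constructor
    · intro hi
      obtain ⟨i', hi', hii'⟩ := Finset.mem_image.mp hi
      rwa [he_inj hii'] at hi'
    · intro hi
      exact Finset.mem_image_of_mem e hi
  have hmemI : ∀ (j : ℕ) (i : Fin k), i ∈ I j ↔ j = (i:ℕ)/s := by
    intro j i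
    rw [hI_def]
    simp only [Finset.mem_filter, Finset.mem_univ, true_and]
    exact unique_block hs (i:ℕ) j
  -- decomposition
  have hdecomp : h = f0 + ∑ j ∈ Finset.range (k+1), w j := by
    funext a
    simp only [Pi.add_apply, Finset.sum_apply]
    by_cases ha : a ∈ T0
    · have : ∀ j ∈ Finset.range (k+1), w j a = 0 := by
        intro j _
        rw [hw_def]
        simp only
        rw [if_neg]
        intro hb
        exact (Finset.mem_compl.mp (hBsub j hb)) ha
      rw [Finset.sum_congr rfl this, Finset.sum_const, smul_zero, hf0_def]
      simp [ha]
    · have ha' : a ∈ T0ᶜ := Finset.mem_compl.mpr ha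
      obtain ⟨i, rfl⟩ := he_surj a ha'
      have hf0a : f0 (e i) = 0 := by rw [hf0_def]; simp [ha]
      rw [hf0a, zero_add]
      rw [Finset.sum_eq_single_of_mem ((i:ℕ)/s)]
      · rw [hw_def]
        simp only
        rw [if_pos]
        rw [hmemB, hmemI]
      · rw [Finset.mem_range]
        have h1 : (i:ℕ)/s ≤ (i:ℕ) := Nat.div_le_self _ _
        have h2 : (i:ℕ) < k := i.2
        omega
      · intro j _ hj
        rw [hw_def]
        simp only
        rw [if_neg]
        rw [hmemB, hmemI]
        exact hj
  -- quantities
  set F1 : ℝ := ∑ a ∈ T0, |h a| with hF1_def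
  set G1 : ℝ := ∑ a ∈ T0ᶜ, |h a| with hG1_def
  set Sg : ℕ → ℝ := fun j => ∑ i ∈ I j, |h (e i)| with hSg_def
  set SQ : ℕ → ℝ := fun j => ∑ i ∈ I j, (h (e i))^2 with hSQ_def
  set SQf0 : ℝ := ∑ a ∈ T0, (h a)^2 with hSQf0_def
  have hSgnn : ∀ j, 0 ≤ Sg j := fun j => Finset.sum_nonneg (fun i _ => abs_nonneg _)
  have hSQnn : ∀ j, 0 ≤ SQ j := fun j => Finset.sum_nonneg (fun i _ => sq_nonneg _)
  have hSQf0nn : 0 ≤ SQf0 := Finset.sum_nonneg (fun i _ => sq_nonneg _)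
  -- sums over w j
  have hwsq : ∀ j, (∑ a, (w j a)^2) = SQ j := by
    intro j
    have h1 : ∑ a ∈ B j, (h a)^2 = ∑ i ∈ I j, (h (e i))^2 := by
      rw [hB_def]
      exact Finset.sum_image (fun i _ i' _ hij => he_inj hij)
    have h2 : ∑ a, (w j a)^2 = ∑ a ∈ B j, (h a)^2 := by
      calc ∑ a, (w j a)^2 = ∑ a ∈ B j, (w j a)^2 :=
            (Finset.sum_subset (Finset.subset_univ _)
              (fun a _ ha => by rw [hw_def]; simp [ha])).symm
        _ = ∑ a ∈ B j, (h a)^2 :=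
            Finset.sum_congr rfl (fun a ha => by rw [hw_def]; simp [ha])
    rw [hSQ_def]
    exact h2.trans h1
  have hf0sq : (∑ a, (f0 a)^2) = SQf0 := by
    rw [hSQf0_def]
    calc ∑ a, (f0 a)^2 = ∑ a ∈ T0, (f0 a)^2 :=
          (Finset.sum_subset (Finset.subset_univ _)
            (fun a _ ha => by rw [hf0_def]; simp [ha])).symm
      _ = ∑ a ∈ T0, (h a)^2 :=
          Finset.sum_congr rfl (fun a ha => by rw [hf0_def]; simp [ha])
  -- cone constraint
  have cone : G1 ≤ F1 := by
    have hxb0 : ∀ a, a ∉ T0 → xbar a = 0 := by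
      intro a ha
      rw [hT0_def] at ha
      simpa using ha
    have e1 : l1norm x = (∑ a ∈ T0, |xbar a + h a|) + ∑ a ∈ T0ᶜ, |h a| := by
      rw [l1norm, ← Finset.sum_add_sum_compl T0]
      congr 1
      · apply Finset.sum_congr rfl
        intro a _
        congr 1
        rw [hh_def]
        simp
      · apply Finset.sum_congr rfl
        intro a ha
        have := hxb0 a (Finset.mem_compl.mp ha)
        rw [hh_def]
        simp [this]
    have e2 : l1norm xbar = ∑ a ∈ T0, |xbar a| := by
      rw [l1norm, ← Finset.sum_add_sum_compl T0]
      have : ∀ a ∈ T0ᶜ, |xbar a| = 0 := by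
        intro a ha
        rw [hxb0 a (Finset.mem_compl.mp ha)]
        simp
      rw [Finset.sum_congr rfl this]
      simp
    have e3 : ∀ a, |xbar a| - |h a| ≤ |xbar a + h a| := by
      intro a
      have h5 : |xbar a| ≤ |xbar a + h a| + |h a| := by
        calc |xbar a| = |(xbar a + h a) - h a| := by congr 1; ring
          _ ≤ |xbar a + h a| + |h a| := abs_sub _ _
      linarith
    have e4 : (∑ a ∈ T0, |xbar a|) - (∑ a ∈ T0, |h a|) ≤ ∑ a ∈ T0, |xbar a + h a| := by
      rw [← Finset.sum_sub_distrib]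
      exact Finset.sum_le_sum (fun a _ => e3 a)
    rw [e1] at hle
    rw [e2] at hle
    rw [hF1_def, hG1_def]
    linarith
  -- block ℓ2 bounds
  have blockineq : ∀ j : ℕ, (s:ℝ) * SQ (j+1) ≤ (Sg j)^2 := by
    intro j
    rcases Finset.eq_empty_or_nonempty (I (j+1)) with hIe | ⟨i1, hi1⟩
    · rw [hSQ_def]
      simp only [hIe, Finset.sum_empty, mul_zero]
      positivity
    · have hmem1 : (j+1)*s ≤ (i1:ℕ) ∧ (i1:ℕ) < (j+1)*s+s := by
        have := Finset.mem_filter.mp (by rw [hI_def] at hi1; exact hi1)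
        exact this.2
      have hks : j*s + s ≤ k := by
        have h2 : (i1:ℕ) < k := i1.2
        have h3 : (j+1)*s = j*s + s := by ring
        omega
      have himg : (I j).image Fin.val = Finset.Ico (j*s) (j*s+s) := by
        ext t
        simp only [Finset.mem_image, Finset.mem_Ico]
        constructor
        · rintro ⟨i, hi, rfl⟩
          rw [hI_def] at hi
          simp only [Finset.mem_filter] at hi
          exact hi.2
        · intro ht
          refine ⟨⟨t, lt_of_lt_of_le ht.2 hks⟩, ?_, rfl⟩
          rw [hI_def]
          simp only [Finset.mem_filter, Finset.mem_univ, true_and]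
          exact ht
      have cardIeq : (I j).card = s := by
        have h4 := Finset.card_image_of_injective (I j) Fin.val_injective
        rw [himg, Nat.card_Ico, Nat.add_sub_cancel_left] at h4
        exact h4.symm
      have pointbound : ∀ i ∈ I (j+1), (s:ℝ) * |h (e i)| ≤ Sg j := by
        intro i hi
        have hile : ∀ i' ∈ I j, |h (e i)| ≤ |h (e i')| := by
          intro i' hi'
          apply he_anti
          have h1 := (Finset.mem_filter.mp (by rw [hI_def] at hi'; exact hi')).2
          have h2 := (Finset.mem_filter.mp (by rw [hI_def] at hi; exact hi)).2
          have h3 : (j+1)*s = j*s + s := by ring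
          rw [Fin.le_def]
          omega
        calc (s:ℝ) * |h (e i)| = ∑ _i' ∈ I j, |h (e i)| := by
              rw [Finset.sum_const, cardIeq, nsmul_eq_mul]
          _ ≤ ∑ i' ∈ I j, |h (e i')| := Finset.sum_le_sum (fun i' hi' => hile i' hi')
          _ = Sg j := by rw [hSg_def]
      have sqpoint : ∀ i ∈ I (j+1), (s:ℝ)^2 * (h (e i))^2 ≤ (Sg j)^2 := by
        intro i hi
        have h1 : ((s:ℝ) * |h (e i)|)^2 ≤ (Sg j)^2 := by
          apply pow_le_pow_left₀ (by positivity) (pointbound i hi)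
        calc (s:ℝ)^2 * (h (e i))^2 = ((s:ℝ) * |h (e i)|)^2 := by
              rw [mul_pow, sq_abs]
          _ ≤ (Sg j)^2 := h1
      have hsum : (s:ℝ)^2 * SQ (j+1) ≤ (I (j+1)).card * (Sg j)^2 := by
        rw [hSQ_def]
        simp only
        rw [Finset.mul_sum]
        calc ∑ i ∈ I (j+1), (s:ℝ)^2 * (h (e i))^2
            ≤ ∑ _i ∈ I (j+1), (Sg j)^2 := Finset.sum_le_sum sqpoint
          _ = (I (j+1)).card * (Sg j)^2 := by rw [Finset.sum_const, nsmul_eq_mul]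
      have hcard' : ((I (j+1)).card : ℝ) ≤ (s:ℝ) := Nat.cast_le.mpr (cardI (j+1))
      have hs' : (0:ℝ) < s := Nat.cast_pos.mpr hs
      have : (s:ℝ) * ((s:ℝ) * SQ (j+1)) ≤ (s:ℝ) * (Sg j)^2 := by
        nlinarith [sq_nonneg (Sg j), hSQnn (j+1)]
      exact le_of_mul_le_mul_left this hs'
  set lam : ℕ → ℝ := fun j => Real.sqrt (SQ j) with hlam_def
  have hlamnn : ∀ j, 0 ≤ lam j := fun j => Real.sqrt_nonneg _
  have sqrtblock : ∀ j : ℕ, Real.sqrt s * lam (j+1) ≤ Sg j := by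
    intro j
    have h1 : Real.sqrt ((s:ℝ) * SQ (j+1)) ≤ Real.sqrt ((Sg j)^2) :=
      Real.sqrt_le_sqrt (blockineq j)
    rwa [Real.sqrt_mul (Nat.cast_nonneg s), Real.sqrt_sq (hSgnn j)] at h1
  -- total tail bound
  set Tt : ℝ := ∑ j ∈ Finset.Ico 1 (k+1), lam j with hTt_def
  have hTtnn : 0 ≤ Tt := Finset.sum_nonneg (fun j _ => hlamnn j)
  have blocksum : ∑ j ∈ Finset.range (k+1), Sg j = G1 := by
    rw [hSg_def, hG1_def]
    have himg : T0ᶜ = univ.image e := by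
      apply Finset.eq_of_subset_of_card_le
      · intro a ha
        obtain ⟨i, rfl⟩ := he_surj a ha
        exact Finset.mem_image_of_mem e (Finset.mem_univ i)
      · rw [Finset.card_image_of_injective _ he_inj, Finset.card_univ, Fintype.card_fin, hk_def]
    rw [himg, Finset.sum_image (fun i _ j _ hij => he_inj hij)]
    rw [hI_def]
    exact sum_blocks hs (fun i => |h (e i)|)
  have tail1 : Real.sqrt s * Tt ≤ G1 := by
    rw [hTt_def, Finset.mul_sum, Finset.sum_Ico_eq_sum_range]
    simp only [Nat.add_sub_cancel]
    calc ∑ j ∈ Finset.range k, Real.sqrt s * lam (1 + j)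
        ≤ ∑ j ∈ Finset.range k, Sg j := by
          apply Finset.sum_le_sum
          intro j _
          rw [add_comm 1 j]
          exact sqrtblock j
      _ ≤ ∑ j ∈ Finset.range (k+1), Sg j := by
          apply Finset.sum_le_sum_of_subset_of_nonneg
          · exact Finset.range_subset_range.mpr (by omega)
          · intro j _ _
            exact hSgnn j
      _ = G1 := blocksum
  set Lf : ℝ := Real.sqrt SQf0 with hLf_def
  have hF1Lf : F1 ≤ Real.sqrt s * Lf := by
    have h1 : F1^2 ≤ (s:ℝ) * SQf0 := by
      calc F1^2 ≤ (T0.card : ℝ) * ∑ a ∈ T0, |h a|^2 := by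
            rw [hF1_def]; exact sq_sum_le_card_mul_sum_sq
        _ = (T0.card : ℝ) * SQf0 := by
            congr 1
            rw [hSQf0_def]
            exact Finset.sum_congr rfl (fun a _ => sq_abs _)
        _ ≤ (s:ℝ) * SQf0 := by
            apply mul_le_mul_of_nonneg_right _ hSQf0nn
            exact_mod_cast hT0card
    have hF1nn : 0 ≤ F1 := Finset.sum_nonneg (fun a _ => abs_nonneg _)
    calc F1 = Real.sqrt (F1^2) := (Real.sqrt_sq hF1nn).symm
      _ ≤ Real.sqrt ((s:ℝ) * SQf0) := Real.sqrt_le_sqrt h1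
      _ = Real.sqrt s * Lf := by rw [Real.sqrt_mul (Nat.cast_nonneg s), hLf_def]
  have hsqrts : (0:ℝ) < Real.sqrt s := Real.sqrt_pos.mpr (Nat.cast_pos.mpr hs)
  have hTLf : Tt ≤ Lf := by
    have : Real.sqrt s * Tt ≤ Real.sqrt s * Lf := le_trans tail1 (le_trans cone hF1Lf)
    exact le_of_mul_le_mul_left this hsqrts
  -- z and its RIP bound
  set z : Fin n → ℝ := f0 + w 0 with hz_def
  have hzsupp : ∀ a, z a ≠ 0 → a ∈ T0 ∪ B 0 := by
    intro a ha
    rw [hz_def] at ha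
    simp only [Pi.add_apply] at ha
    by_cases h1 : a ∈ T0
    · exact Finset.mem_union_left _ h1
    · apply Finset.mem_union_right
      by_contra h2
      apply ha
      rw [hf0_def, hw_def]
      simp [h1, h2]
  have hdisjT0B : ∀ j, Disjoint T0 (B j) := by
    intro j
    rw [Finset.disjoint_left]
    intro a ha hb
    exact (Finset.mem_compl.mp (hBsub j hb)) ha
  have hdisjBB : ∀ j j', j ≠ j' → Disjoint (B j) (B j') := by
    intro j j' hjj
    rw [Finset.disjoint_left]
    intro a haj haj'
    obtain ⟨i, hi, rfl⟩ := Finset.mem_image.mp (by rw [hB_def] at haj; exact haj)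
    have hij : i ∈ I j := hi
    have hij' : i ∈ I j' := (hmemB j' i).mp haj'
    rw [hmemI] at hij hij'
    exact hjj (hij.trans hij'.symm)
  have hf0w0 : ∀ a, f0 a * w 0 a = 0 := by
    intro a
    by_cases h1 : a ∈ T0
    · have : a ∉ B 0 := Finset.disjoint_left.mp (hdisjT0B 0) h1
      rw [hw_def]
      simp [this]
    · rw [hf0_def]
      simp [h1]
  set SQz : ℝ := SQf0 + SQ 0 with hSQz_def
  have hSQznn : 0 ≤ SQz := by
    rw [hSQz_def]
    have := hSQnn 0
    linarith
  have hzsq : (∑ a, (z a)^2) = SQz := by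
    rw [hSQz_def, ← hf0sq, ← hwsq 0, ← Finset.sum_add_distrib]
    apply Finset.sum_congr rfl
    intro a _
    rw [hz_def]
    simp only [Pi.add_apply]
    have := hf0w0 a
    nlinarith [hf0w0 a]
  set Lz : ℝ := Real.sqrt SQz with hLz_def
  have hLznn : 0 ≤ Lz := Real.sqrt_nonneg _
  have hLzsq : Lz^2 = SQz := Real.sq_sqrt hSQznn
  have hLfLz : Lf ≤ Lz := by
    rw [hLf_def, hLz_def]
    apply Real.sqrt_le_sqrt
    rw [hSQz_def]
    linarith [hSQnn 0]
  -- l0 bound on z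
  have hzl0 : l0norm z ≤ 2 * s := by
    apply le_trans (l0_le_of_subset z _ hzsupp)
    apply le_trans (Finset.card_union_le _ _)
    have := cardB 0
    omega
  have hRIPz := (hRIP z hzl0).1
  rw [hzsq] at hRIPz
  -- A z = - sum of tail
  have hAwsum : ∀ (J : Finset ℕ), A *ᵥ (∑ j ∈ J, w j) = ∑ j ∈ J, A *ᵥ (w j) := by
    intro J
    induction J using Finset.induction with
    | empty => simp [Matrix.mulVec_zero]
    | insert _ _ hj ih =>
        rw [Finset.sum_insert hj, Matrix.mulVec_add, ih, Finset.sum_insert hj]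
  have hrangesplit : Finset.range (k+1) = insert 0 (Finset.Ico 1 (k+1)) := by
    ext j
    simp only [Finset.mem_range, Finset.mem_insert, Finset.mem_Ico]
    omega
  have hzero_not : (0:ℕ) ∉ Finset.Ico 1 (k+1) := by simp
  have hdecomp2 : h = z + ∑ j ∈ Finset.Ico 1 (k+1), w j := by
    rw [hdecomp, hrangesplit, Finset.sum_insert hzero_not, hz_def]
    abel
  have hAz : A *ᵥ z = - ∑ j ∈ Finset.Ico 1 (k+1), A *ᵥ (w j) := by
    have : A *ᵥ h = A *ᵥ z + ∑ j ∈ Finset.Ico 1 (k+1), A *ᵥ (w j) := by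
      rw [hdecomp2, Matrix.mulVec_add, hAwsum]
    rw [hAh] at this
    exact eq_neg_of_add_eq_zero_left this.symm
  -- inner products
  set D : (Fin n → ℝ) → (Fin n → ℝ) → ℝ :=
    fun u v => ∑ jd, (A *ᵥ u) jd * (A *ᵥ v) jd with hD_def
  set Q : ℝ := ∑ jd, ((A *ᵥ z) jd)^2 with hQ_def
  have hQ1 : Q = - ∑ j ∈ Finset.Ico 1 (k+1), D z (w j) := by
    rw [hQ_def, hD_def]
    calc ∑ jd, ((A *ᵥ z) jd)^2 = ∑ jd, (A *ᵥ z) jd * (A *ᵥ z) jd := by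
          apply Finset.sum_congr rfl; intro jd _; ring
      _ = ∑ jd, (A *ᵥ z) jd * ((- ∑ j ∈ Finset.Ico 1 (k+1), A *ᵥ (w j)) jd) := by
          apply Finset.sum_congr rfl; intro jd _; rw [← hAz]
      _ = ∑ jd, - ∑ j ∈ Finset.Ico 1 (k+1), (A *ᵥ z) jd * (A *ᵥ (w j)) jd := by
          apply Finset.sum_congr rfl
          intro jd _
          rw [Pi.neg_apply, Finset.sum_apply, mul_neg, Finset.mul_sum]
      _ = - ∑ j ∈ Finset.Ico 1 (k+1), ∑ jd, (A *ᵥ z) jd * (A *ᵥ (w j)) jd := by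
          rw [Finset.sum_neg_distrib, Finset.sum_comm]
  have hDsplit : ∀ j, D z (w j) = D f0 (w j) + D (w 0) (w j) := by
    intro j
    rw [hD_def]
    simp only
    rw [hz_def, Matrix.mulVec_add, ← Finset.sum_add_distrib]
    apply Finset.sum_congr rfl
    intro jd _
    simp only [Pi.add_apply]
    ring
  have hf0supp : ∀ a, f0 a ≠ 0 → a ∈ T0 := by
    intro a ha
    by_contra hc
    apply ha
    rw [hf0_def]
    simp [hc]
  have hwsupp : ∀ j a, w j a ≠ 0 → a ∈ B j := by
    intro j a ha
    by_contra hc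
    apply ha
    rw [hw_def]
    simp [hc]
  have hbound : ∀ j ∈ Finset.Ico 1 (k+1), |D z (w j)| ≤ δ * (Lf + lam 0) * lam j := by
    intro j hj
    have hj1 : j ≠ 0 := by rw [Finset.mem_Ico] at hj; omega
    have h1 : |D f0 (w j)| ≤ δ * Lf * lam j := by
      have hb := ro s A δ hRIP f0 (w j) T0 (B j) (hdisjT0B j)
        (by have := cardB j; omega) hf0supp (hwsupp j)
      rw [hf0sq, hwsq j, ← hLf_def] at hb
      have : Real.sqrt (SQ j) = lam j := by rw [hlam_def]
      rw [this] at hb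
      exact hb
    have h2 : |D (w 0) (w j)| ≤ δ * lam 0 * lam j := by
      have hb := ro s A δ hRIP (w 0) (w j) (B 0) (B j) (hdisjBB 0 j (Ne.symm hj1))
        (by have := cardB 0; have := cardB j; omega) (hwsupp 0) (hwsupp j)
      rw [hwsq 0, hwsq j] at hb
      have e0 : Real.sqrt (SQ 0) = lam 0 := by rw [hlam_def]
      have ej : Real.sqrt (SQ j) = lam j := by rw [hlam_def]
      rw [e0, ej] at hb
      exact hb
    calc |D z (w j)| = |D f0 (w j) + D (w 0) (w j)| := by rw [hDsplit j]
      _ ≤ |D f0 (w j)| + |D (w 0) (w j)| := abs_add_le _ _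
      _ ≤ δ * Lf * lam j + δ * lam 0 * lam j := add_le_add h1 h2
      _ = δ * (Lf + lam 0) * lam j := by ring
  have hQ2 : Q ≤ δ * (Lf + lam 0) * Tt := by
    rw [hQ1]
    have h1 : - ∑ j ∈ Finset.Ico 1 (k+1), D z (w j)
        ≤ ∑ j ∈ Finset.Ico 1 (k+1), |D z (w j)| := by
      rw [← Finset.sum_neg_distrib]
      apply Finset.sum_le_sum
      intro j _
      exact neg_le_abs _
    apply le_trans h1
    calc ∑ j ∈ Finset.Ico 1 (k+1), |D z (w j)|
        ≤ ∑ j ∈ Finset.Ico 1 (k+1), δ * (Lf + lam 0) * lam j :=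
          Finset.sum_le_sum hbound
      _ = δ * (Lf + lam 0) * Tt := by rw [hTt_def, Finset.mul_sum]
  have hLfnn : 0 ≤ Lf := Real.sqrt_nonneg _
  have hLfl0 : Lf + lam 0 ≤ Real.sqrt 2 * Lz := by
    have hLf2 : Lf^2 = SQf0 := Real.sq_sqrt hSQf0nn
    have hl02 : (lam 0)^2 = SQ 0 := Real.sq_sqrt (hSQnn 0)
    have h1 : (Lf + lam 0)^2 ≤ 2 * SQz := by
      rw [hSQz_def]
      nlinarith [sq_nonneg (Lf - lam 0)]
    have h2 : 0 ≤ Lf + lam 0 := add_nonneg hLfnn (hlamnn 0)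
    calc Lf + lam 0 = Real.sqrt ((Lf + lam 0)^2) := (Real.sqrt_sq h2).symm
      _ ≤ Real.sqrt (2 * SQz) := Real.sqrt_le_sqrt h1
      _ = Real.sqrt 2 * Lz := by
          rw [Real.sqrt_mul (by norm_num : (0:ℝ) ≤ 2), hLz_def]
  have hsqrt2 : (Real.sqrt 2)^2 = 2 := Real.sq_sqrt (by norm_num)
  have hsqrt2nn : 0 ≤ Real.sqrt 2 := Real.sqrt_nonneg 2
  have final : (1 - δ) * SQz ≤ Real.sqrt 2 * δ * SQz := by
    have c1 : δ * (Lf + lam 0) * Tt ≤ δ * (Real.sqrt 2 * Lz) * Tt := by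
      apply mul_le_mul_of_nonneg_right _ hTtnn
      exact mul_le_mul_of_nonneg_left hLfl0 (le_of_lt hδ0)
    have c2 : δ * (Real.sqrt 2 * Lz) * Tt ≤ δ * (Real.sqrt 2 * Lz) * Lz := by
      apply mul_le_mul_of_nonneg_left (hTLf.trans hLfLz)
      positivity
    have c3 : δ * (Real.sqrt 2 * Lz) * Lz = Real.sqrt 2 * δ * SQz := by
      have hLL : Lz * Lz = SQz := by nlinarith [hLzsq]
      rw [← hLL]
      ring
    calc (1 - δ) * SQz ≤ Q := hRIPz
      _ ≤ δ * (Lf + lam 0) * Tt := hQ2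
      _ ≤ δ * (Real.sqrt 2 * Lz) * Tt := c1
      _ ≤ δ * (Real.sqrt 2 * Lz) * Lz := c2
      _ = Real.sqrt 2 * δ * SQz := c3
  have hSQz0 : SQz = 0 := by
    have h6 : δ * (1 + Real.sqrt 2) < (Real.sqrt 2 - 1) * (1 + Real.sqrt 2) := by
      apply mul_lt_mul_of_pos_right hδ
      positivity
    have h7 : (Real.sqrt 2 - 1) * (1 + Real.sqrt 2) = 1 := by nlinarith [hsqrt2]
    have hc : 0 < 1 - δ - Real.sqrt 2 * δ := by nlinarith
    have h9a : (1 - δ - Real.sqrt 2 * δ) * SQz ≤ 0 := by nlinarith [final]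
    have h9b : 0 ≤ (1 - δ - Real.sqrt 2 * δ) * SQz := mul_nonneg hc.le hSQznn
    have h9 : (1 - δ - Real.sqrt 2 * δ) * SQz = 0 := le_antisymm h9a h9b
    rcases mul_eq_zero.mp h9 with h10 | h10
    · exact absurd h10 (ne_of_gt hc)
    · exact h10
  have hSQf00 : SQf0 = 0 := by
    have := hSQnn 0
    rw [hSQz_def] at hSQz0
    linarith
  have hf0z : ∀ a ∈ T0, h a = 0 := by
    intro a ha
    have h1 : ∑ a ∈ T0, (h a)^2 = 0 := by rw [← hSQf0_def]; exact hSQf00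
    have h2 := (Finset.sum_eq_zero_iff_of_nonneg
      (fun a _ => sq_nonneg (h a))).mp h1 a ha
    exact pow_eq_zero_iff (by norm_num) |>.mp h2
  have hF10 : F1 = 0 := by
    rw [hF1_def]
    apply Finset.sum_eq_zero
    intro a ha
    rw [hf0z a ha]
    simp
  have hG1nn : 0 ≤ G1 := Finset.sum_nonneg (fun a _ => abs_nonneg _)
  have hG10 : G1 = 0 := le_antisymm (by linarith) hG1nn
  have hG1z : ∀ a ∈ T0ᶜ, h a = 0 := by
    intro a ha
    have h1 : ∑ a ∈ T0ᶜ, |h a| = 0 := by rw [← hG1_def]; exact hG10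
    have h2 := (Finset.sum_eq_zero_iff_of_nonneg
      (fun a _ => abs_nonneg (h a))).mp h1 a ha
    exact abs_eq_zero.mp h2
  funext a
  have hha : h a = 0 := by
    by_cases ha : a ∈ T0
    · exact hf0z a ha
    · exact hG1z a (Finset.mem_compl.mpr ha)
  rw [hh_def] at hha
  simp only [Pi.sub_apply] at hha
  linarith


/-- If `A` satisfies the RIP of order `2s` with constant `δ < √2 − 1` and `x̄` is an
`s`-sparse solution of `Ax = b`, then `x̄` is the unique minimizer of `‖x‖₁` over
`{x : Ax = b}`; in particular the minimum-ℓ1 solution also solves the minimum-ℓ0 problem. -/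
theorem stmt_3 {m n : ℕ} (s : ℕ) (A : Matrix (Fin m) (Fin n) ℝ) (δ : ℝ)
    (hδ0 : 0 < δ) (hδ : δ < Real.sqrt 2 - 1)
    (hRIP : ∀ y : Fin n → ℝ, l0norm y ≤ 2 * s →
      (1 - δ) * (∑ i, (y i) ^ 2) ≤ (∑ j, ((A *ᵥ y) j) ^ 2) ∧
      (∑ j, ((A *ᵥ y) j) ^ 2) ≤ (1 + δ) * (∑ i, (y i) ^ 2))
    (b : Fin m → ℝ) (xbar : Fin n → ℝ)
    (hxbar : A *ᵥ xbar = b) (hsparse : l0norm xbar ≤ s) :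
    (∀ x : Fin n → ℝ, A *ᵥ x = b → x ≠ xbar → l1norm xbar < l1norm x) ∧
    (∀ x : Fin n → ℝ, A *ᵥ x = b → l0norm xbar ≤ l0norm x) := by
  classical
  constructor
  · intro x hx hne
    by_contra hlt
    push_neg at hlt
    exact hne (key_unique s A δ hδ0 hδ hRIP xbar hsparse x (by rw [hx, hxbar]) hlt)
  · intro x hx
    by_contra hlt
    push_neg at hlt
    have hδ1 : δ < 1 := by
      have h2 : Real.sqrt 2 < 2 := by
        nlinarith [Real.sq_sqrt (show (0:ℝ) ≤ 2 by norm_num), Real.sqrt_nonneg 2]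
      linarith
    set d : Fin n → ℝ := x - xbar with hd_def
    have hAd : A *ᵥ d = 0 := by
      rw [hd_def, Matrix.mulVec_sub, hx, hxbar, sub_self]
    have hsupp : l0norm d ≤ 2 * s := by
      have hsub : (univ.filter (fun i => d i ≠ 0))
          ⊆ (univ.filter (fun i => x i ≠ 0)) ∪ (univ.filter (fun i => xbar i ≠ 0)) := by
        intro i hi
        simp only [Finset.mem_filter, Finset.mem_union, Finset.mem_univ, true_and] at hi ⊢
        by_contra hc
        push_neg at hc
        apply hi
        rw [hd_def]
        simp only [Pi.sub_apply, hc.1, hc.2, sub_zero]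
      have e1 := l0_eq x
      have e2 := l0_eq xbar
      have e3 := l0_eq d
      have e4 := Finset.card_le_card hsub
      have e5 := Finset.card_union_le (univ.filter (fun i => x i ≠ 0))
        (univ.filter (fun i => xbar i ≠ 0))
      have hxs : l0norm x ≤ s := le_trans (le_of_lt hlt) hsparse
      omega
    have hlow := (hRIP d hsupp).1
    rw [hAd] at hlow
    simp only [Pi.zero_apply, ne_eq, OfNat.ofNat_ne_zero, not_false_eq_true,
      zero_pow, Finset.sum_const_zero] at hlow
    have hdnn : 0 ≤ ∑ i, (d i)^2 := Finset.sum_nonneg (fun i _ => sq_nonneg _)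
    have hsum0 : (∑ i, (d i)^2) = 0 := by nlinarith
    have hd0 := (sum_sq_eq_zero_iff d).mp hsum0
    have hxx : x = xbar := by
      funext i
      have := hd0 i
      rw [hd_def] at this
      simp only [Pi.sub_apply] at this
      linarith
    rw [hxx] at hlt
    exact lt_irrefl _ hlt
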